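/- For λ ∈ [−1,0), r ∈ (0,1), and α ∈ ℂ with 0 < |α| < r^{1−λ}: 0 < I_a(r) < I_a(1), where I_a(r) = 1 + λ|α|²r^{2λ−2} + (1/(2log|α|))(−2|α|^{−2/λ}r^{2/λ−2}log r + λ|α|^{−2/λ}r^{2/λ−2} + 2λ²|α|²r^{2λ−2}log r − λ|α|²r^{2λ−2}). -/

import Mathlib

open Real

private lemma yx_le (lam s : ℝ) (hlam0 : -1 ≤ lam) (hlam1 : lam < 0) (hs : 0 < s) :
    Real.exp (2*s/lam) ≤ Real.exp (-(2*s)) := by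
  apply Real.exp_le_exp.mpr
  rw [div_le_iff_of_neg hlam1]
  nlinarith

private lemma aux_pos (lam t s L x y : ℝ) (hlam0 : -1 ≤ lam) (hlam1 : lam < 0)
    (ht : t < 0) (hs : 0 < s) (hLdef : L = (1-lam)*t - s)
    (hx : x = Real.exp (-(2*s))) (hy : y = Real.exp (2*s/lam)) :
    2*L + 2*lam*L*x + (lam - 2*t)*y + (2*lam^2*t - lam)*x < 0 := by
  have hne : lam ≠ 0 := hlam1.ne
  subst hLdef
  have hx0 : 0 < x := hx ▸ Real.exp_pos _
  have hy0 : 0 < y := hy ▸ Real.exp_pos _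
  have hx1 : x < 1 := by rw [hx]; exact Real.exp_lt_one_iff.mpr (by linarith)
  have hyx : y ≤ x := by rw [hx, hy]; exact yx_le lam s hlam0 hlam1 hs
  have hL0 : (1-lam)*t - s < 0 := by nlinarith
  rcases le_or_gt 0 (lam - 2*t) with hc | hc
  · have h1 : (lam - 2*t)*y ≤ (lam - 2*t)*x := mul_le_mul_of_nonneg_left hyx hc
    have h2 : 0 < lam*((1-lam)*t - s) := mul_pos_of_neg_of_neg hlam1 hL0
    have hb : (0:ℝ) < 2*lam*((1-lam)*t - s) + 2*lam^2*t - 2*t := by nlinarith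
    nlinarith [mul_lt_mul_of_pos_left hx1 hb, h1,
      mul_nonneg (by linarith : (0:ℝ) ≤ 1+lam) hs.le]
  · have key := Real.add_one_le_exp (2*s/lam)
    have hly : lam*y ≤ 2*s + lam := by
      have h := mul_le_mul_of_nonpos_left key hlam1.le
      have h2 : lam*(2*s/lam + 1) = 2*s + lam := by field_simp
      rw [hy]; linarith
    have hox : (2*s+1)*x < 1 := by
      have h := Real.add_one_lt_exp (show 2*s ≠ 0 by positivity)
      have h2 : x * Real.exp (2*s) = 1 := by rw [hx, ← Real.exp_add]; norm_num
      nlinarith [hx0]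
    by_contra hcon; push_neg at hcon
    have hh1 : (lam - 2*t)*(2*s+lam) ≤ (lam - 2*t)*(lam*y) :=
      mul_le_mul_of_nonpos_left hly hc.le
    have hh1b := mul_le_mul_of_nonneg_left hh1 (show (0:ℝ) ≤ 2*s+1 by linarith)
    have hcoef : lam^2*(2*t - 2*s - 1) < 0 := by
      nlinarith [mul_pos_of_neg_of_neg hlam1 hlam1]
    have hh2 : lam^2*(2*t-2*s-1) < (2*s+1) * (lam^2*(2*t-2*s-1)*x) := by
      nlinarith [mul_lt_mul_of_neg_left hox hcoef]
    have hts : 0 < (-t)*s := mul_pos (by linarith) hs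
    nlinarith [mul_nonneg (mul_nonneg (show (0:ℝ) ≤ 2*s+1 by linarith)
        (show (0:ℝ) ≤ -lam by linarith)) hcon,
      hh1b, hh2, mul_pos hts hs, mul_nonneg hts.le (sq_nonneg lam)]

private lemma aux_lt (lam t s L x y z w1 w2 : ℝ) (hlam0 : -1 ≤ lam) (hlam1 : lam < 0)
    (ht : t < 0) (hs : 0 < s) (hLdef : L = (1-lam)*t - s)
    (hx : x = Real.exp (-(2*s))) (hy : y = Real.exp (2*s/lam))
    (hz : z = 2*(lam-1)*t) (hw1 : w1 = Real.exp (-z)) (hw2 : w2 = Real.exp (z/lam)) :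
    (2*L + 2*lam*L*(w1*x) + lam*(w2*y) - lam*(w1*x))
      - (2*L + 2*lam*L*x + (lam - 2*t)*y + (2*lam^2*t - lam)*x) < 0 := by
  have hne : lam ≠ 0 := hlam1.ne
  subst hLdef
  have hx0 : 0 < x := hx ▸ Real.exp_pos _
  have hy0 : 0 < y := hy ▸ Real.exp_pos _
  have hw10 : 0 < w1 := hw1 ▸ Real.exp_pos _
  have hyx : y ≤ x := by rw [hx, hy]; exact yx_le lam s hlam0 hlam1 hs
  have hzpos : 0 < z := by rw [hz]; nlinarith
  have hlt : 0 ≤ 2*lam*t := by nlinarith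
  have hw2b : lam*w2 ≤ z + lam := by
    have key := Real.add_one_le_exp (z/lam)
    have h := mul_le_mul_of_nonpos_left key hlam1.le
    have h2 : lam*(z/lam + 1) = z + lam := by field_simp
    rw [hw2]; linarith
  have h5a : lam*w2 - lam + 2*t ≤ 2*lam*t := by rw [hz] at hw2b; linarith
  have h5b : (lam*w2 - lam + 2*t)*y ≤ (2*lam*t)*y := mul_le_mul_of_nonneg_right h5a hy0.le
  have h5c : (2*lam*t)*y ≤ (2*lam*t)*x := mul_le_mul_of_nonneg_left hyx hlt
  have hw1a : (1+z)*w1 < 1 := by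
    have h := Real.add_one_lt_exp (ne_of_gt hzpos)
    have h2 : w1 * Real.exp z = 1 := by rw [hw1, ← Real.exp_add]; norm_num
    nlinarith [mul_lt_mul_of_pos_right h hw10]
  have hw11 : w1 < 1 := by rw [hw1]; exact Real.exp_lt_one_iff.mpr (by linarith)
  have h6 : z < (2*((1-lam)*t - s)-1)*(w1-1) := by
    nlinarith [mul_nonneg hs.le (by linarith : (0:ℝ) ≤ 1 - w1), hw1a, hzpos]
  have h6' : 0 < (2*((1-lam)*t - s)-1)*(w1-1) + 2*t*(1-lam) := by
    rw [hz] at h6; nlinarith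
  have h7 : lam * (((2*((1-lam)*t - s)-1)*(w1-1) + 2*t*(1-lam)) * x) < 0 :=
    mul_neg_of_neg_of_pos hlam1 (mul_pos h6' hx0)
  nlinarith [h5b, h5c, h7]

/-- For `λ ∈ [−1,0)`, `r ∈ (0,1)`, `0 < |α| < r^{1−λ}`: `0 < I_a(r) < I_a(1)`. -/
theorem Ia_lt_Ia_one
    (lam : ℝ) (hlam0 : -1 ≤ lam) (hlam1 : lam < 0)
    (r : ℝ) (hr0 : 0 < r) (hr1 : r < 1)
    (α : ℂ) (hα0 : 0 < ‖α‖) (hα : ‖α‖ < r ^ ((1 : ℝ) - lam)) :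
    let A : ℝ := ‖α‖
    let Ia : ℝ → ℝ := fun s =>
      1 + lam * A ^ 2 * s ^ (2 * lam - 2)
        + (1 / (2 * Real.log A)) *
            (-2 * A ^ (-(2 : ℝ) / lam) * s ^ (2 / lam - 2) * Real.log s
              + lam * A ^ (-(2 : ℝ) / lam) * s ^ (2 / lam - 2)
              + 2 * lam ^ 2 * A ^ 2 * s ^ (2 * lam - 2) * Real.log s
              - lam * A ^ 2 * s ^ (2 * lam - 2))
    0 < Ia r ∧ Ia r < Ia 1 := by
  intro A Ia
  have hA0 : 0 < A := hα0
  have hlamne : lam ≠ 0 := hlam1.ne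
  set t := Real.log r with htdef
  set L := Real.log A with hLdef
  have ht : t < 0 := Real.log_neg hr0 hr1
  have hLlt : L < (1-lam)*t := by
    have h := Real.log_lt_log hα0 hα
    rw [Real.log_rpow hr0] at h
    exact h
  set s : ℝ := (1-lam)*t - L with hsdef
  have hs : 0 < s := by rw [hsdef]; linarith
  set z : ℝ := 2*(lam-1)*t with hzdef
  set x : ℝ := Real.exp (-(2*s)) with hxdef
  set y : ℝ := Real.exp (2*s/lam) with hydef
  set w1 : ℝ := Real.exp (-z) with hw1def
  set w2 : ℝ := Real.exp (z/lam) with hw2def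
  have hL0 : L < 0 := by nlinarith
  have h2L : (2:ℝ)*L ≠ 0 := by
    intro h; apply absurd h; intro h'; nlinarith
  have hAexp : A = Real.exp L := by rw [hLdef]; exact (Real.exp_log hA0).symm
  have hrexp : r = Real.exp t := by rw [htdef]; exact (Real.exp_log hr0).symm
  -- key product formulas
  have hX : A^2 * r ^ (2*lam - 2) = x := by
    rw [Real.rpow_def_of_pos hr0, hAexp, hxdef, sq, ← Real.exp_add, ← Real.exp_add]
    congr 1
    rw [hsdef, htdef]
    ring
  have hY : A ^ (-(2:ℝ)/lam) * r ^ (2/lam - 2) = y := by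
    rw [Real.rpow_def_of_pos hr0, Real.rpow_def_of_pos hA0, hydef, ← Real.exp_add]
    congr 1
    rw [hsdef, htdef, hLdef]
    field_simp
    ring
  have hB : A^2 = w1 * x := by
    rw [hAexp, hw1def, hxdef, sq, ← Real.exp_add, ← Real.exp_add]
    congr 1
    rw [hsdef, hzdef]
    ring
  have hC : A ^ (-(2:ℝ)/lam) = w2 * y := by
    rw [Real.rpow_def_of_pos hA0, hw2def, hydef, ← Real.exp_add]
    congr 1
    rw [hsdef, hzdef, hLdef]
    field_simp
    ring
  -- formulas for Ia r and Ia 1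
  have hfr : Ia r = 1 + lam*x + (1/(2*L)) *
      (-2*y*t + lam*y + 2*lam^2*x*t - lam*x) := by
    show 1 + lam * A ^ 2 * r ^ (2 * lam - 2)
        + (1 / (2 * L)) *
            (-2 * A ^ (-(2 : ℝ) / lam) * r ^ (2 / lam - 2) * t
              + lam * A ^ (-(2 : ℝ) / lam) * r ^ (2 / lam - 2)
              + 2 * lam ^ 2 * A ^ 2 * r ^ (2 * lam - 2) * t
              - lam * A ^ 2 * r ^ (2 * lam - 2)) = _
    linear_combination (lam + (1/(2*L))*(2*lam^2*t - lam)) * hX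
      + ((1/(2*L))*(lam - 2*t)) * hY
  have hf1 : Ia 1 = 1 + lam*(w1*x) + (1/(2*L)) * (lam*(w2*y) - lam*(w1*x)) := by
    show 1 + lam * A ^ 2 * (1:ℝ) ^ (2 * lam - 2)
        + (1 / (2 * L)) *
            (-2 * A ^ (-(2 : ℝ) / lam) * (1:ℝ) ^ (2 / lam - 2) * Real.log 1
              + lam * A ^ (-(2 : ℝ) / lam) * (1:ℝ) ^ (2 / lam - 2)
              + 2 * lam ^ 2 * A ^ 2 * (1:ℝ) ^ (2 * lam - 2) * Real.log 1
              - lam * A ^ 2 * (1:ℝ) ^ (2 * lam - 2)) = _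
    rw [Real.one_rpow, Real.one_rpow, Real.log_one]
    linear_combination (lam + (1/(2*L))*(-lam)) * hB + ((1/(2*L))*lam) * hC
  have hJ : 2*L + 2*lam*L*x + (lam - 2*t)*y + (2*lam^2*t - lam)*x < 0 :=
    aux_pos lam t s L x y hlam0 hlam1 ht hs (by rw [hsdef]; ring) hxdef hydef
  have hD : (2*L + 2*lam*L*(w1*x) + lam*(w2*y) - lam*(w1*x))
      - (2*L + 2*lam*L*x + (lam - 2*t)*y + (2*lam^2*t - lam)*x) < 0 :=
    aux_lt lam t s L x y z w1 w2 hlam0 hlam1 ht hs (by rw [hsdef]; ring)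
      hxdef hydef hzdef hw1def hw2def
  have hLne : L ≠ 0 := ne_of_lt hL0
  have h2Lneg : 2*L < 0 := by linarith
  have hq1 : 1 + lam*x + (1/(2*L)) * (-2*y*t + lam*y + 2*lam^2*x*t - lam*x)
      = (2*L + 2*lam*L*x + (lam - 2*t)*y + (2*lam^2*t - lam)*x)/(2*L) := by
    field_simp
    ring
  have hq2 : 1 + lam*(w1*x) + (1/(2*L)) * (lam*(w2*y) - lam*(w1*x))
      = (2*L + 2*lam*L*(w1*x) + lam*(w2*y) - lam*(w1*x))/(2*L) := by
    field_simp
    ring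
  constructor
  · rw [hfr, hq1]
    exact div_pos_of_neg_of_neg hJ h2Lneg
  · rw [hfr, hf1, hq1, hq2]
    exact (div_lt_div_right_of_neg h2Lneg).mpr (by linarith [hD])
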